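/- Let n ≥ 3 and let Ω ⊆ ℝⁿ be open. Fix integers 1 ≤ m₁ ≤ m₂ ≤ n and real constants a₁,…,a_{m₁}, b₁,…,b_{m₂} with Σ_{i=1}^{m₁} aᵢ ≠ 0 and bⱼ ≠ 0 for all j. Set M(x) = Σ_{i=1}^{m₁} aᵢ xᵢ, P(x) = Σ_{j=1}^{m₂} bⱼ xⱼ, η = Σ_{j=1}^{m₂} bⱼ², θ = −2 Σ_{i=1}^{m₁} aᵢ bᵢ, δ = Σ_{i=1}^{m₁} aᵢ², and assume D := 4ηδ − θ² > 0. Let k ≠ 0 and k₁ be real constants and define u(x) = k₁ + (2k/√D)·arctan((θ·P(x) + 2η·M(x))/(√D·P(x))). Suppose Ω ⊆ {x : P(x) ≠ 0} and u > 0 on Ω, and set N = 1/u, φ = N^{1/(n−2)}, ψ = √((n−1)/(2(n−2)))·(1 − N). Then the triple (φ, N, ψ) satisfies the electrostatic PDE system with cosmological constant Λ = 0 on Ω. -/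

import Mathlib

/-- The partial derivative of `f : ℝⁿ → ℝ` in the `i`-th coordinate direction. -/
noncomputable def pd {n : ℕ} (i : Fin n) (f : (Fin n → ℝ) → ℝ) : (Fin n → ℝ) → ℝ :=
  fun x => fderiv ℝ f x (Pi.single i 1)

namespace MPaux

variable {n : ℕ} {f h : (Fin n → ℝ) → ℝ} {y : Fin n → ℝ} {g gf gh : Fin n → ℝ}

/-- `f` has partial derivatives `g i` at `y`. -/
def HasPD (f : (Fin n → ℝ) → ℝ) (y : Fin n → ℝ) (g : Fin n → ℝ) : Prop :=
  ∃ L : (Fin n → ℝ) →L[ℝ] ℝ, HasFDerivAt f L y ∧ ∀ i, L (Pi.single i 1) = g i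

theorem HasPD.pd_eq (hf : HasPD f y g) (i : Fin n) : pd i f y = g i := by
  obtain ⟨L, hL, hLi⟩ := hf
  unfold pd; rw [hL.fderiv]; exact hLi i

theorem HasPD.continuousAt (hf : HasPD f y g) : ContinuousAt f y := by
  obtain ⟨L, hL, _⟩ := hf; exact hL.continuousAt

theorem HasPD.congr_fun (hf : HasPD f y gf) (hg : ∀ i, gf i = g i) : HasPD f y g := by
  obtain ⟨L, hL, hLi⟩ := hf
  exact ⟨L, hL, fun i => (hLi i).trans (hg i)⟩

theorem HasPD.congr (hf : HasPD f y g) (hfh : ∀ z, f z = h z) : HasPD h y g := by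
  obtain ⟨L, hL, hLi⟩ := hf
  exact ⟨L, by rw [show h = f from funext fun z => (hfh z).symm]; exact hL, hLi⟩

theorem hasPD_const (c : ℝ) : HasPD (fun _ => c) y (fun _ => 0) :=
  ⟨0, hasFDerivAt_const c y, fun _ => rfl⟩

theorem HasPD.add (hf : HasPD f y gf) (hh : HasPD h y gh) :
    HasPD (fun z => f z + h z) y (fun i => gf i + gh i) := by
  obtain ⟨L, hL, hLi⟩ := hf; obtain ⟨L', hL', hLi'⟩ := hh
  exact ⟨L + L', hL.add hL', fun i => by simp [hLi i, hLi' i]⟩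

theorem HasPD.neg (hf : HasPD f y gf) : HasPD (fun z => -f z) y (fun i => -gf i) := by
  obtain ⟨L, hL, hLi⟩ := hf
  exact ⟨-L, hL.neg, fun i => by simp [hLi i]⟩

theorem HasPD.sub (hf : HasPD f y gf) (hh : HasPD h y gh) :
    HasPD (fun z => f z - h z) y (fun i => gf i - gh i) := by
  obtain ⟨L, hL, hLi⟩ := hf; obtain ⟨L', hL', hLi'⟩ := hh
  exact ⟨L - L', hL.sub hL', fun i => by simp [hLi i, hLi' i]⟩

theorem HasPD.const_add (hf : HasPD f y gf) (c : ℝ) :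
    HasPD (fun z => c + f z) y gf := by
  obtain ⟨L, hL, hLi⟩ := hf
  exact ⟨L, hL.const_add c, hLi⟩

theorem HasPD.const_mul (hf : HasPD f y gf) (c : ℝ) :
    HasPD (fun z => c * f z) y (fun i => c * gf i) := by
  obtain ⟨L, hL, hLi⟩ := hf
  exact ⟨c • L, hL.const_mul c, fun i => by simp [hLi i]⟩

theorem HasPD.mul (hf : HasPD f y gf) (hh : HasPD h y gh) :
    HasPD (fun z => f z * h z) y (fun i => f y * gh i + h y * gf i) := by
  obtain ⟨L, hL, hLi⟩ := hf; obtain ⟨L', hL', hLi'⟩ := hh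
  exact ⟨f y • L' + h y • L, hL.mul hL', fun i => by simp [hLi i, hLi' i]⟩

theorem HasPD.comp {H : ℝ → ℝ} {c : ℝ} (hH : HasDerivAt H c (f y)) (hf : HasPD f y gf) :
    HasPD (fun z => H (f z)) y (fun i => c * gf i) := by
  obtain ⟨L, hL, hLi⟩ := hf
  exact ⟨c • L, hH.comp_hasFDerivAt y hL, fun i => by simp [hLi i]⟩

theorem HasPD.inv (hf : HasPD f y gf) (h0 : f y ≠ 0) :
    HasPD (fun z => (f z)⁻¹) y (fun i => -gf i / f y ^ 2) := by
  exact (HasPD.comp (hasDerivAt_inv h0) hf).congr_fun (fun i => by field_simp)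

theorem hasPD_linear (C : Fin n → ℝ) (y : Fin n → ℝ) :
    HasPD (fun z => ∑ i, C i * z i) y C := by
  refine ⟨∑ i, C i • ContinuousLinearMap.proj i, ?_, ?_⟩
  · refine HasFDerivAt.fun_sum fun i _ => ?_
    exact ((ContinuousLinearMap.proj (R := ℝ) (φ := fun _ : Fin n => ℝ) i).hasFDerivAt).const_mul (C i)
  · intro j
    simp [ContinuousLinearMap.sum_apply, Pi.single_apply]

theorem pd_pd_eq {V : Set (Fin n → ℝ)} (hV : IsOpen V) {x : Fin n → ℝ} (hx : x ∈ V)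
    {f dfj : (Fin n → ℝ) → ℝ} {j : Fin n}
    (hagree : ∀ z ∈ V, pd j f z = dfj z) {g : Fin n → ℝ} (hd : HasPD dfj x g) (i : Fin n) :
    pd i (pd j f) x = g i := by
  have heq : pd j f =ᶠ[nhds x] dfj := Filter.eventuallyEq_of_mem (hV.mem_nhds hx) hagree
  have h1 : pd i (pd j f) x = fderiv ℝ dfj x (Pi.single i 1) := by
    show fderiv ℝ (pd j f) x (Pi.single i 1) = _
    rw [heq.fderiv_eq]
  rw [h1]
  exact hd.pd_eq i

end MPaux

/-- The electrostatic PDE system with cosmological constant `Λ` on `Ω ⊆ ℝⁿ`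
(equations (2.2)-(2.5) of the paper). -/
def ElectrostaticSystem {n : ℕ} (Ω : Set (Fin n → ℝ)) (φ N ψ : (Fin n → ℝ) → ℝ)
    (Λ : ℝ) : Prop :=
  ∀ x ∈ Ω,
    (∀ i j : Fin n, i ≠ j →
      ((n : ℝ) - 2) * N x * pd i (pd j φ) x - φ x * pd i (pd j N) x
        - pd i φ x * pd j N x - pd j φ x * pd i N x
        + (2 * φ x / N x) * (pd i ψ x * pd j ψ x) = 0) ∧
    (∀ i : Fin n,
      φ x * (((n : ℝ) - 2) * N x * pd i (pd i φ) x - φ x * pd i (pd i N) x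
          - 2 * pd i φ x * pd i N x + (2 * φ x / N x) * (pd i ψ x) ^ 2)
        + ∑ k : Fin n, (φ x * N x * pd k (pd k φ) x + φ x * pd k φ x * pd k N x
          - ((n : ℝ) - 1) * N x * (pd k φ x) ^ 2
          - (2 / (((n : ℝ) - 1) * N x)) * (φ x) ^ 2 * (pd k ψ x) ^ 2)
        = (2 * Λ / ((n : ℝ) - 1)) * N x) ∧
    (∑ k : Fin n, (N x * φ x * pd k (pd k ψ) x
        - ((n : ℝ) - 2) * N x * pd k φ x * pd k ψ x
        - φ x * pd k ψ x * pd k N x) = 0) ∧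
    (∑ k : Fin n, ((φ x) ^ 2 * N x * pd k (pd k N) x
        - ((n : ℝ) - 2) * φ x * pd k φ x * N x * pd k N x
        - (2 * ((n : ℝ) - 2) / ((n : ℝ) - 1)) * (φ x) ^ 2 * (pd k ψ x) ^ 2)
      = -(2 * Λ / ((n : ℝ) - 1)) * (N x) ^ 2)

set_option maxHeartbeats 1600000 in
open MPaux in
/-- Theorem 1.2 of the paper: the dilation-invariant
Majumdar–Papapetrou solution of the electrovacuum system. -/
theorem dilation_invariant_MP_solution
    (n : ℕ) (hn : 3 ≤ n) (Ω : Set (Fin n → ℝ)) (hΩ : IsOpen Ω)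
    (m₁ m₂ : ℕ) (hm₁ : 1 ≤ m₁) (hm₁₂ : m₁ ≤ m₂) (hm₂ : m₂ ≤ n)
    (a b : Fin n → ℝ)
    (ha : (∑ i : Fin n, if (i : ℕ) < m₁ then a i else 0) ≠ 0)
    (hb : ∀ j : Fin n, (j : ℕ) < m₂ → b j ≠ 0)
    (M P : (Fin n → ℝ) → ℝ)
    (hM : M = fun x => ∑ i : Fin n, if (i : ℕ) < m₁ then a i * x i else 0)
    (hP : P = fun x => ∑ j : Fin n, if (j : ℕ) < m₂ then b j * x j else 0)
    (η θ δ : ℝ)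
    (hη : η = ∑ j : Fin n, if (j : ℕ) < m₂ then (b j) ^ 2 else 0)
    (hθ : θ = -2 * ∑ i : Fin n, if (i : ℕ) < m₁ then a i * b i else 0)
    (hδ : δ = ∑ i : Fin n, if (i : ℕ) < m₁ then (a i) ^ 2 else 0)
    (D : ℝ) (hD : D = 4 * η * δ - θ ^ 2) (hDpos : 0 < D)
    (k k₁ : ℝ) (hk : k ≠ 0)
    (u : (Fin n → ℝ) → ℝ)
    (hu : u = fun x => k₁ + (2 * k / Real.sqrt D) *
      Real.arctan ((θ * P x + 2 * η * M x) / (Real.sqrt D * P x)))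
    (hΩP : Ω ⊆ {x | P x ≠ 0})
    (hupos : ∀ x ∈ Ω, 0 < u x)
    (N φ ψ : (Fin n → ℝ) → ℝ)
    (hN : N = fun x => 1 / u x)
    (hφ : φ = fun x => N x ^ ((1 : ℝ) / ((n : ℝ) - 2)))
    (hψ : ψ = fun x => Real.sqrt (((n : ℝ) - 1) / (2 * ((n : ℝ) - 2))) * (1 - N x)) :
    ElectrostaticSystem Ω φ N ψ 0 := by
  have hn2 : ((n : ℝ) - 2) ≠ 0 := by
    have : (3:ℝ) ≤ (n:ℝ) := by exact_mod_cast hn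
    nlinarith
  have hn2pos : (0:ℝ) < (n:ℝ) - 2 := by
    have : (3:ℝ) ≤ (n:ℝ) := by exact_mod_cast hn
    linarith
  have hn1 : ((n : ℝ) - 1) ≠ 0 := by
    have : (3:ℝ) ≤ (n:ℝ) := by exact_mod_cast hn
    nlinarith
  set c : ℝ := Real.sqrt (((n : ℝ) - 1) / (2 * ((n : ℝ) - 2))) with hc
  have hc2 : c ^ 2 = ((n : ℝ) - 1) / (2 * ((n : ℝ) - 2)) := by
    rw [hc]; apply Real.sq_sqrt
    apply div_nonneg <;> nlinarith
  set s : ℝ := Real.sqrt D with hs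
  have hspos : 0 < s := by rw [hs]; exact Real.sqrt_pos.2 hDpos
  have hs0 : s ≠ 0 := hspos.ne'
  have hs2 : s ^ 2 = 4 * η * δ - θ ^ 2 := by
    rw [hs, Real.sq_sqrt hDpos.le, hD]
  set A : Fin n → ℝ := fun i => if (i : ℕ) < m₁ then a i else 0 with hA
  set B : Fin n → ℝ := fun i => if (i : ℕ) < m₂ then b i else 0 with hB
  have hM' : ∀ z, M z = ∑ i, A i * z i := by
    intro z; rw [hM]
    refine Finset.sum_congr rfl fun i _ => ?_
    simp only [hA]; rw [ite_mul, zero_mul]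
  have hP' : ∀ z, P z = ∑ i, B i * z i := by
    intro z; rw [hP]
    refine Finset.sum_congr rfl fun i _ => ?_
    simp only [hB]; rw [ite_mul, zero_mul]
  have hAB : ∑ i, A i * B i = -θ / 2 := by
    have h1 : ∑ i, A i * B i = ∑ i : Fin n, if (i : ℕ) < m₁ then a i * b i else 0 := by
      refine Finset.sum_congr rfl fun i _ => ?_
      simp only [hA, hB]
      by_cases h : (i : ℕ) < m₁
      · simp [h, lt_of_lt_of_le h hm₁₂]
      · simp [h]
    rw [h1, hθ]; ring
  have hA2 : ∑ i, (A i) ^ 2 = δ := by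
    rw [hδ]
    refine Finset.sum_congr rfl fun i _ => ?_
    simp only [hA]
    by_cases h : (i : ℕ) < m₁ <;> simp [h]
  have hB2 : ∑ i, (B i) ^ 2 = η := by
    rw [hη]
    refine Finset.sum_congr rfl fun i _ => ?_
    simp only [hB]
    by_cases h : (i : ℕ) < m₂ <;> simp [h]
  have hηpos : 0 < η := by
    rw [hη]
    apply Finset.sum_pos'
    · intro i _
      split
      · positivity
      · exact le_rfl
    · have hlt : (0:ℕ) < n := by omega
      refine ⟨⟨0, hlt⟩, Finset.mem_univ _, ?_⟩
      have h0 : ((⟨0, hlt⟩ : Fin n) : ℕ) < m₂ := by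
        simp only [Fin.val_mk]; omega
      simp only [h0, if_true]
      have := hb ⟨0, hlt⟩ h0
      positivity
  set Q : (Fin n → ℝ) → ℝ := fun z => δ * P z ^ 2 + θ * (P z * M z) + η * M z ^ 2 with hQ
  have h4Q : ∀ z, 4 * η * Q z = s ^ 2 * P z ^ 2 + (θ * P z + 2 * η * M z) ^ 2 := by
    intro z; simp only [hQ]
    linear_combination (-(P z ^ 2)) * hs2
  have hQpos : ∀ z, P z ≠ 0 → 0 < Q z := by
    intro z hz
    have h1 : 0 < s ^ 2 * P z ^ 2 := by positivity
    have h2 : 0 ≤ (θ * P z + 2 * η * M z) ^ 2 := sq_nonneg _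
    nlinarith [h4Q z]
  set du : Fin n → (Fin n → ℝ) → ℝ := fun i z => k * (A i * P z - B i * M z) / Q z with hdu
  set R : Fin n → (Fin n → ℝ) → ℝ :=
    fun j z => (2 * δ * P z + θ * M z) * B j + (θ * P z + 2 * η * M z) * A j with hR
  set d2u : Fin n → Fin n → (Fin n → ℝ) → ℝ := fun i j z =>
    k * ((A i * B j - B i * A j) * Q z - (A i * P z - B i * M z) * R j z) / Q z ^ 2 with hd2u
  have hMPD : ∀ z, HasPD M z A := fun z =>
    (hasPD_linear A z).congr (fun w => (hM' w).symm)
  have hPPD : ∀ z, HasPD P z B := fun z =>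
    (hasPD_linear B z).congr (fun w => (hP' w).symm)
  have hQPD : ∀ z, HasPD Q z (fun j => R j z) := by
    intro z
    have h1 := ((hPPD z).mul (hPPD z)).const_mul δ
    have h2 := ((hPPD z).mul (hMPD z)).const_mul θ
    have h3 := ((hMPD z).mul (hMPD z)).const_mul η
    refine (((h1.add h2).add h3).congr (fun w => ?_)).congr_fun (fun j => ?_)
    · simp only [hQ]; ring
    · simp only [hR]; ring
  have huPD : ∀ z, P z ≠ 0 → HasPD u z (fun i => du i z) := by
    intro z hz
    have hQz := (hQpos z hz).ne'
    have hden : s * P z ≠ 0 := mul_ne_zero hs0 hz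
    have hnum : HasPD (fun w => θ * P w + 2 * η * M w) z (fun i => θ * B i + 2 * η * A i) :=
      ((hPPD z).const_mul θ).add ((hMPD z).const_mul (2 * η))
    have hdeninv : HasPD (fun w => (s * P w)⁻¹) z (fun i => -(s * B i) / (s * P z) ^ 2) :=
      ((hPPD z).const_mul s).inv hden
    have hfrac := hnum.mul hdeninv
    have hatn := HasPD.comp (Real.hasDerivAt_arctan ((θ * P z + 2 * η * M z) * (s * P z)⁻¹)) hfrac
    have hfull := (hatn.const_mul (2 * k / s)).const_add k₁
    have h1t : 1 + ((θ * P z + 2 * η * M z) * (s * P z)⁻¹) ^ 2 = 4 * η * Q z / (s ^ 2 * P z ^ 2) := by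
      rw [eq_div_iff (by positivity : (0:ℝ) < s ^ 2 * P z ^ 2).ne', h4Q z]
      field_simp
    refine (hfull.congr (fun w => ?_)).congr_fun (fun i => ?_)
    · simp only [hu, div_eq_mul_inv]
    · rw [h1t, one_div_div]
      simp only [hdu]
      rw [eq_div_iff hQz]
      field_simp [hs0, hz]
      ring
  have hduPD : ∀ (i : Fin n) z, P z ≠ 0 → HasPD (du i) z (fun j => d2u i j z) := by
    intro i z hz
    have hQz := (hQpos z hz).ne'
    have hlin : HasPD (fun w => A i * P w - B i * M w) z (fun j => A i * B j - B i * A j) :=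
      ((hPPD z).const_mul (A i)).sub ((hMPD z).const_mul (B i))
    have hqinv := (hQPD z).inv hQz
    have := (hlin.mul hqinv).const_mul k
    refine (this.congr (fun w => ?_)).congr_fun (fun j => ?_)
    · simp only [hdu]; rw [div_eq_mul_inv]; ring
    · simp only [hd2u]
      field_simp
      ring
  have htrace : ∀ z, P z ≠ 0 → ∑ j, d2u j j z = 0 := by
    intro z hz
    have hQz := (hQpos z hz).ne'
    have hWR : ∑ j, (A j * P z - B j * M z) * R j z = 0 := by
      have h1 : ∀ j : Fin n, (A j * P z - B j * M z) * R j z =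
          (2 * δ * P z ^ 2 - 2 * η * M z ^ 2) * (A j * B j)
          + (θ * P z ^ 2 + 2 * η * P z * M z) * (A j) ^ 2
          - (2 * δ * P z * M z + θ * M z ^ 2) * (B j) ^ 2 := by
        intro j; simp only [hR]; ring
      rw [Finset.sum_congr rfl (fun j _ => h1 j)]
      rw [Finset.sum_sub_distrib, Finset.sum_add_distrib,
        ← Finset.mul_sum, ← Finset.mul_sum, ← Finset.mul_sum, hAB, hA2, hB2]
      ring
    have h2 : ∀ j : Fin n, d2u j j z = (-(k) / Q z ^ 2) * ((A j * P z - B j * M z) * R j z) := by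
      intro j; simp only [hd2u]; ring
    rw [Finset.sum_congr rfl (fun j _ => h2 j), ← Finset.mul_sum, hWR, mul_zero]
  -- the open set V
  set V : Set (Fin n → ℝ) := {z | P z ≠ 0 ∧ 0 < u z} with hV
  have hVopen : IsOpen V := by
    rw [isOpen_iff_mem_nhds]
    intro z hz
    have h1 : ∀ᶠ w in nhds z, P w ≠ 0 := (hPPD z).continuousAt.eventually_ne hz.1
    have h2 : ∀ᶠ w in nhds z, 0 < u w :=
      (huPD z hz.1).continuousAt.eventually (eventually_gt_nhds hz.2)
    filter_upwards [h1, h2] with w hw1 hw2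
    exact ⟨hw1, hw2⟩
  have hNPD : ∀ z ∈ V, HasPD N z (fun i => -(du i z) / u z ^ 2) := by
    intro z hz
    exact ((huPD z hz.1).inv hz.2.ne').congr (fun w => by simp only [hN, one_div])
  have hNposV : ∀ z ∈ V, 0 < N z := by
    intro z hz; rw [hN]
    exact one_div_pos.2 hz.2
  have hφPD : ∀ z ∈ V, HasPD φ z
      (fun i => (1 : ℝ) / ((n : ℝ) - 2) *
        (N z ^ ((1 : ℝ) / ((n : ℝ) - 2) - 1) * (-(du i z) / u z ^ 2))) := by
    intro z hz
    have h1 := HasPD.comp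
      (Real.hasDerivAt_rpow_const (x := N z) (p := (1 : ℝ) / ((n : ℝ) - 2))
        (Or.inl (hNposV z hz).ne')) (hNPD z hz)
    refine (h1.congr (fun w => ?_)).congr_fun (fun i => by ring)
    · simp only [hφ]
  have hψPD : ∀ z ∈ V, HasPD ψ z (fun i => c * (du i z / u z ^ 2)) := by
    intro z hz
    have h1 := ((hasPD_const (1 : ℝ)).sub (hNPD z hz)).const_mul c
    refine (h1.congr (fun w => ?_)).congr_fun (fun i => by ring)
    · simp only [hψ]
  -- now fix x
  intro x hx
  have hPx : P x ≠ 0 := hΩP hx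
  have hux : 0 < u x := hupos x hx
  have hux0 : u x ≠ 0 := hux.ne'
  have hxV : x ∈ V := ⟨hPx, hux⟩
  have hNxpos : 0 < N x := hNposV x hxV
  have hNxeq : N x = 1 / u x := by rw [hN]
  have hφxeq : φ x = N x ^ ((1 : ℝ) / ((n : ℝ) - 2)) := by rw [hφ]
  have hr1 : N x ^ ((1 : ℝ) / ((n : ℝ) - 2) - 1) = φ x * u x := by
    rw [Real.rpow_sub hNxpos, Real.rpow_one, hφxeq, hNxeq]
    field_simp
  have hr2 : N x ^ ((1 : ℝ) / ((n : ℝ) - 2) - 1 - 1) = φ x * u x ^ 2 := by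
    rw [Real.rpow_sub hNxpos _ 1, Real.rpow_one, hr1, hNxeq]
    field_simp
  -- second-derivative building blocks at x
  have hu2inv : HasPD (fun w => (u w * u w)⁻¹) x
      (fun i => -(u x * du i x + u x * du i x) / (u x * u x) ^ 2) :=
    ((huPD x hPx).mul (huPD x hPx)).inv (by positivity)
  have hdNPDx : ∀ j : Fin n, HasPD (fun w => -(du j w) / u w ^ 2) x
      (fun i => -(d2u j i x) / u x ^ 2 + 2 * du j x * du i x / u x ^ 3) := by
    intro j
    have h1 := ((hduPD j x hPx).neg).mul hu2inv
    refine (h1.congr (fun w => ?_)).congr_fun (fun i => ?_)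
    · rw [pow_two, div_eq_mul_inv]
    · field_simp [hux0]
      ring
  have hdφPDx : ∀ j : Fin n, HasPD
      (fun w => (1 : ℝ) / ((n : ℝ) - 2) *
        (N w ^ ((1 : ℝ) / ((n : ℝ) - 2) - 1) * (-(du j w) / u w ^ 2))) x
      (fun i => (1 : ℝ) / ((n : ℝ) - 2) *
        (N x ^ ((1 : ℝ) / ((n : ℝ) - 2) - 1) *
            (-(d2u j i x) / u x ^ 2 + 2 * du j x * du i x / u x ^ 3)
          + -(du j x) / u x ^ 2 *
            (((1 : ℝ) / ((n : ℝ) - 2) - 1) * N x ^ ((1 : ℝ) / ((n : ℝ) - 2) - 1 - 1) *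
              (-(du i x) / u x ^ 2)))) := by
    intro j
    have hp := HasPD.comp
      (Real.hasDerivAt_rpow_const (x := N x) (p := (1 : ℝ) / ((n : ℝ) - 2) - 1)
        (Or.inl hNxpos.ne')) (hNPD x hxV)
    exact (hp.mul (hdNPDx j)).const_mul _
  have hdψPDx : ∀ j : Fin n, HasPD (fun w => c * (du j w / u w ^ 2)) x
      (fun i => c * (d2u j i x / u x ^ 2 - 2 * du j x * du i x / u x ^ 3)) := by
    intro j
    have h1 := (hduPD j x hPx).mul hu2inv
    have h2 : HasPD (fun w => du j w / u w ^ 2) x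
        (fun i => d2u j i x / u x ^ 2 - 2 * du j x * du i x / u x ^ 3) := by
      refine (h1.congr (fun w => ?_)).congr_fun (fun i => ?_)
      · rw [pow_two, div_eq_mul_inv]
      · field_simp [hux0]
        ring
    exact h2.const_mul c
  -- pd values at x
  have eN1 : ∀ i : Fin n, pd i N x = -(du i x) / u x ^ 2 := fun i => (hNPD x hxV).pd_eq i
  have eψ1 : ∀ i : Fin n, pd i ψ x = c * (du i x / u x ^ 2) := fun i => (hψPD x hxV).pd_eq i
  have eφ1 : ∀ i : Fin n, pd i φ x =
      (1 : ℝ) / ((n : ℝ) - 2) * (φ x * u x * (-(du i x) / u x ^ 2)) := by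
    intro i
    have := (hφPD x hxV).pd_eq i
    rw [this, hr1]
  have eN2 : ∀ i j : Fin n, pd i (pd j N) x =
      -(d2u j i x) / u x ^ 2 + 2 * du j x * du i x / u x ^ 3 := by
    intro i j
    exact pd_pd_eq hVopen hxV (fun z hz => (hNPD z hz).pd_eq j) (hdNPDx j) i
  have eψ2 : ∀ i j : Fin n, pd i (pd j ψ) x =
      c * (d2u j i x / u x ^ 2 - 2 * du j x * du i x / u x ^ 3) := by
    intro i j
    exact pd_pd_eq hVopen hxV (fun z hz => (hψPD z hz).pd_eq j) (hdψPDx j) i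
  have eφ2 : ∀ i j : Fin n, pd i (pd j φ) x =
      (1 : ℝ) / ((n : ℝ) - 2) *
        (φ x * u x * (-(d2u j i x) / u x ^ 2 + 2 * du j x * du i x / u x ^ 3)
          + -(du j x) / u x ^ 2 *
            (((1 : ℝ) / ((n : ℝ) - 2) - 1) * (φ x * u x ^ 2) * (-(du i x) / u x ^ 2))) := by
    intro i j
    have h1 := pd_pd_eq hVopen hxV (fun z hz => (hφPD z hz).pd_eq j) (hdφPDx j) i
    rw [h1, hr1, hr2]
  have eψψ : ∀ i j : Fin n, pd i ψ x * pd j ψ x =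
      ((n : ℝ) - 1) / (2 * ((n : ℝ) - 2)) * (du i x * du j x / u x ^ 4) := by
    intro i j
    rw [eψ1 i, eψ1 j]
    linear_combination (du i x * du j x / u x ^ 4) * hc2
  have eψsq : ∀ i : Fin n, (pd i ψ x) ^ 2 =
      ((n : ℝ) - 1) / (2 * ((n : ℝ) - 2)) * (du i x ^ 2 / u x ^ 4) := by
    intro i
    rw [eψ1 i]
    linear_combination (du i x ^ 2 / u x ^ 4) * hc2
  refine ⟨?_, ?_, ?_, ?_⟩
  · -- equation (i)
    intro i j hij
    rw [eφ2, eN2, eφ1 i, eφ1 j, eN1 i, eN1 j, eψψ i j, hNxeq]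
    field_simp
    ring
  · -- equation (ii)
    intro i
    have hbr : ((n : ℝ) - 2) * N x * pd i (pd i φ) x - φ x * pd i (pd i N) x
        - 2 * pd i φ x * pd i N x + (2 * φ x / N x) * (pd i ψ x) ^ 2 = 0 := by
      rw [eφ2, eN2, eφ1, eN1, eψsq, hNxeq]
      field_simp
      ring
    have hterm : ∀ kk : Fin n, φ x * N x * pd kk (pd kk φ) x + φ x * pd kk φ x * pd kk N x
        - ((n : ℝ) - 1) * N x * (pd kk φ x) ^ 2
        - (2 / (((n : ℝ) - 1) * N x)) * (φ x) ^ 2 * (pd kk ψ x) ^ 2 =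
        (-(1 / ((n : ℝ) - 2)) * (φ x) ^ 2 / u x ^ 2) * d2u kk kk x := by
      intro kk
      rw [eφ2, eφ1, eN1, eψsq, hNxeq]
      field_simp
      ring
    rw [hbr, mul_zero, zero_add]
    rw [Finset.sum_congr rfl (fun kk _ => hterm kk), ← Finset.mul_sum, htrace x hPx, mul_zero]
    norm_num
  · -- equation (iii)
    have hterm : ∀ kk : Fin n, N x * φ x * pd kk (pd kk ψ) x
        - ((n : ℝ) - 2) * N x * pd kk φ x * pd kk ψ x
        - φ x * pd kk ψ x * pd kk N x = (c * φ x / u x ^ 3) * d2u kk kk x := by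
      intro kk
      rw [eψ2, eφ1, eψ1, eN1, hNxeq]
      field_simp
      ring
    rw [Finset.sum_congr rfl (fun kk _ => hterm kk), ← Finset.mul_sum, htrace x hPx, mul_zero]
  · -- equation (iv)
    have hterm : ∀ kk : Fin n, (φ x) ^ 2 * N x * pd kk (pd kk N) x
        - ((n : ℝ) - 2) * φ x * pd kk φ x * N x * pd kk N x
        - (2 * ((n : ℝ) - 2) / ((n : ℝ) - 1)) * (φ x) ^ 2 * (pd kk ψ x) ^ 2 =
        (-(φ x) ^ 2 / u x ^ 3) * d2u kk kk x := by
      intro kk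
      rw [eN2, eφ1, eN1, eψsq, hNxeq]
      field_simp
      ring
    rw [Finset.sum_congr rfl (fun kk _ => hterm kk), ← Finset.mul_sum, htrace x hPx, mul_zero]
    norm_num
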